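/- Let σ be a type and let f, g ∈ MvPolynomial σ (ZMod 2) be homogeneous of degrees d and e respectively. Then for every k ∈ ℕ, MvPolynomial.homogeneousComponent (d + e + k) (Sq (f * g)) = ∑_{i = 0}^{k} (MvPolynomial.homogeneousComponent (d + i) (Sq f)) * (MvPolynomial.homogeneousComponent (e + (k − i)) (Sq g)). (This is the Cartan formula Sq^k(fg) = ∑_{i+j=k} Sq^i f · Sq^j g in the polynomial model.) -/

import Mathlib

open MvPolynomial

/-- The total Steenrod square: the `𝔽₂`-algebra endomorphism sending
each variable `X j` to `X j + (X j)²`. -/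
noncomputable def Sq (σ : Type*) :
    MvPolynomial σ (ZMod 2) →ₐ[ZMod 2] MvPolynomial σ (ZMod 2) :=
  MvPolynomial.aeval fun j => MvPolynomial.X j + (MvPolynomial.X j) ^ 2

lemma degree_add'' {σ : Type*} (u v : σ →₀ ℕ) :
    (u + v).degree = u.degree + v.degree := by
  simp [Finsupp.degree_eq_weight_one, map_add]

lemma homogeneousComponent_mul'' {σ R : Type*} [CommSemiring R]
    (p q : MvPolynomial σ R) (n : ℕ) :
    homogeneousComponent n (p * q) =
      ∑ ij ∈ Finset.HasAntidiagonal.antidiagonal n,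
        homogeneousComponent ij.1 p * homogeneousComponent ij.2 q := by
  classical
  ext s
  rw [coeff_homogeneousComponent, MvPolynomial.coeff_sum]
  simp_rw [coeff_mul, coeff_homogeneousComponent]
  rw [Finset.sum_comm]
  have step : ∀ uv ∈ Finset.HasAntidiagonal.antidiagonal s,
      (∑ ij ∈ Finset.HasAntidiagonal.antidiagonal n,
        (if uv.1.degree = ij.1 then coeff uv.1 p else 0) *
          (if uv.2.degree = ij.2 then coeff uv.2 q else 0)) =
      if s.degree = n then coeff uv.1 p * coeff uv.2 q else 0 := by
    intro uv huv
    have hsum : uv.1 + uv.2 = s := Finset.HasAntidiagonal.mem_antidiagonal.mp huv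
    have hdeg : s.degree = uv.1.degree + uv.2.degree := by
      rw [← hsum, degree_add'']
    have h2 : ∀ ij ∈ Finset.HasAntidiagonal.antidiagonal n,
        (if uv.1.degree = ij.1 then coeff uv.1 p else 0) *
          (if uv.2.degree = ij.2 then coeff uv.2 q else 0) =
        if ij = (uv.1.degree, uv.2.degree) then coeff uv.1 p * coeff uv.2 q else 0 := by
      intro ij _
      by_cases h1 : uv.1.degree = ij.1
      · by_cases h2 : uv.2.degree = ij.2
        · have : ij = (uv.1.degree, uv.2.degree) := Prod.ext_iff.mpr ⟨h1.symm, h2.symm⟩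
          rw [if_pos h1, if_pos h2, if_pos this]
        · have : ij ≠ (uv.1.degree, uv.2.degree) := fun hc => h2 (by rw [hc])
          simp [h2, this]
      · have : ij ≠ (uv.1.degree, uv.2.degree) := fun hc => h1 (by rw [hc])
        simp [h1, this]
    rw [Finset.sum_congr rfl h2, Finset.sum_ite_eq' (Finset.HasAntidiagonal.antidiagonal n)]
    by_cases h : uv.1.degree + uv.2.degree = n <;>
      simp [Finset.HasAntidiagonal.mem_antidiagonal, h, hdeg]
  rw [Finset.sum_congr rfl step]
  by_cases h : s.degree = n <;> simp [h, coeff_mul]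

lemma le_degree_of_coeff_Sq {σ : Type*} {d : ℕ} {f : MvPolynomial σ (ZMod 2)}
    (hf : f.IsHomogeneous d) {s : σ →₀ ℕ} (h : coeff s (Sq σ f) ≠ 0) :
    d ≤ s.degree := by
  classical
  rw [f.as_sum, map_sum, MvPolynomial.coeff_sum] at h
  obtain ⟨u, hu, hne⟩ := Finset.exists_ne_zero_of_sum_ne_zero h
  have hud : u.degree = d := by
    rw [Finsupp.degree_eq_weight_one]
    exact hf (mem_support_iff.mp hu)
  have key : Sq σ (monomial u (coeff u f)) =
      monomial u (coeff u f) * u.prod fun j n => (1 + X j) ^ n := by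
    rw [Sq, aeval_monomial]
    have : (u.prod fun j n => (X j + (X j : MvPolynomial σ (ZMod 2)) ^ 2) ^ n) =
        (u.prod fun j n => (X j : MvPolynomial σ (ZMod 2)) ^ n) *
          u.prod fun j n => (1 + X j) ^ n := by
      rw [← Finsupp.prod_mul]
      apply Finsupp.prod_congr
      intro j _
      rw [← mul_pow]
      ring_nf
    rw [this, monomial_eq, algebraMap_eq, mul_assoc]
  rw [key, MvPolynomial.coeff_monomial_mul'] at hne
  have hle : u ≤ s := by
    by_contra hc
    simp [hc] at hne
  calc d = u.degree := hud.symm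
    _ ≤ s.degree := by
        have : s = u + (s - u) := (add_tsub_cancel_of_le hle).symm
        rw [this, degree_add'']
        exact Nat.le_add_right _ _

lemma hc_Sq_eq_zero {σ : Type*} {d : ℕ} {f : MvPolynomial σ (ZMod 2)}
    (hf : f.IsHomogeneous d) {m : ℕ} (hm : m < d) :
    homogeneousComponent m (Sq σ f) = 0 := by
  apply homogeneousComponent_eq_zero'
  intro u hu
  have := le_degree_of_coeff_Sq hf (mem_support_iff.mp hu)
  omega

/-- Cartan formula: `Sq^k (f g) = ∑_{i + j = k} Sq^i f · Sq^j g`. -/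
theorem cartan_formula (σ : Type*) (d e : ℕ) (f g : MvPolynomial σ (ZMod 2))
    (hf : f.IsHomogeneous d) (hg : g.IsHomogeneous e) (k : ℕ) :
    MvPolynomial.homogeneousComponent (d + e + k) (Sq σ (f * g)) =
      ∑ i ∈ Finset.range (k + 1),
        MvPolynomial.homogeneousComponent (d + i) (Sq σ f) *
          MvPolynomial.homogeneousComponent (e + (k - i)) (Sq σ g) := by
  classical
  rw [map_mul, homogeneousComponent_mul'']
  set S : Finset (ℕ × ℕ) :=
    (Finset.range (k + 1)).image (fun i => (d + i, e + (k - i))) with hS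
  have hsub : S ⊆ Finset.HasAntidiagonal.antidiagonal (d + e + k) := by
    intro x hx
    simp only [hS, Finset.mem_image, Finset.mem_range] at hx
    obtain ⟨i, hi, rfl⟩ := hx
    rw [Finset.HasAntidiagonal.mem_antidiagonal]
    omega
  rw [← Finset.sum_subset hsub ?_]
  · rw [Finset.sum_image ?_]
    intro a _ b _ hab
    simpa using congrArg Prod.fst hab
  · intro x hx hnx
    rw [Finset.HasAntidiagonal.mem_antidiagonal] at hx
    by_cases h1 : x.1 < d
    · rw [hc_Sq_eq_zero hf h1, zero_mul]
    · by_cases h2 : x.2 < e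
      · rw [hc_Sq_eq_zero hg h2, mul_zero]
      · exfalso
        apply hnx
        simp only [hS, Finset.mem_image, Finset.mem_range]
        exact ⟨x.1 - d, by omega, by rw [Prod.ext_iff]; constructor <;> simp <;> omega⟩
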